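/- If a finite word w has two distinct points of symmetry a and b, then gcd(b-a, |w|) is a period of w; in particular, w is not primitive. -/

import Mathlib

/-- A word `w` of length `n` has a point of symmetry at `a` if
`w_{(a-i) mod n} = w_i` for all `0 ≤ i ≤ n-1`. -/
def PointOfSymmetry {A : Type} [Inhabited A] (w : List A) (a : ℕ) : Prop :=
  ∀ i < w.length,
    w.getD ((((a : ℤ) - (i : ℤ)) % (w.length : ℤ)).toNat) default = w.getD i default

/-- `p` is a period of `w`: `p < |w|` and `w_i = w_{i+p}` for all `i < |w| - p`. -/
def IsPeriod {A : Type} [Inhabited A] (w : List A) (p : ℕ) : Prop :=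
  p < w.length ∧ ∀ i, i + p < w.length → w.getD i default = w.getD (i + p) default

/-- A word is primitive if it is not a power `u^p` with `p ≥ 2`. -/
def Primitive {A : Type} (w : List A) : Prop :=
  ¬ ∃ (u : List A) (p : ℕ), 2 ≤ p ∧ w = (List.replicate p u).flatten


lemma flatten_replicate_len {A : Type} (u : List A) (p : ℕ) :
    ((List.replicate p u).flatten).length = p * u.length := by
  simp [List.length_flatten, List.map_replicate, List.sum_replicate, smul_eq_mul]

lemma flatten_replicate_getD {A : Type} [Inhabited A] (u : List A) (p : ℕ) :
    ∀ i, i < p * u.length →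
    ((List.replicate p u).flatten).getD i default = u.getD (i % u.length) default := by
  induction p with
  | zero => intro i h; omega
  | succ p ih =>
    intro i h
    have hs : (p + 1) * u.length = p * u.length + u.length := by ring
    rw [List.replicate_succ, List.flatten_cons]
    by_cases hi : i < u.length
    · rw [List.getD_append u _ default i hi, Nat.mod_eq_of_lt hi]
    · push_neg at hi
      rw [List.getD_append_right u _ default i hi, ih (i - u.length) (by omega),
        Nat.mod_eq_sub_mod hi]

theorem two_points_of_symmetry {A : Type} [Inhabited A] (w : List A) (a b : ℕ)
    (hab : a < b) (hb : b < w.length)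
    (hA : PointOfSymmetry w a) (hB : PointOfSymmetry w b) :
    IsPeriod w (Nat.gcd (b - a) w.length) ∧ ¬ Primitive w := by
  set n := w.length with hn
  have hn0 : 0 < n := lt_of_le_of_lt (Nat.zero_le b) hb
  set v : ℤ → A := fun i => w.getD ((i % (n : ℤ)).toNat) default with hv
  have hcong : ∀ i j : ℤ, i % n = j % n → v i = v j := by
    intro i j h; simp only [hv, h]
  have hval : ∀ i : ℕ, i < n → v i = w.getD i default := by
    intro i hi
    simp only [hv]
    rw [Int.emod_eq_of_lt (by positivity) (by exact_mod_cast hi), Int.toNat_natCast]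
  -- extend symmetry to all integers
  have hsym : ∀ c : ℕ, PointOfSymmetry w c → ∀ i : ℤ, v ((c : ℤ) - i) = v i := by
    intro c hc i
    have h1 : 0 ≤ i % n := Int.emod_nonneg i (by exact_mod_cast hn0.ne')
    have h2 : i % n < n := Int.emod_lt_of_pos i (by exact_mod_cast hn0)
    set j : ℕ := (i % n).toNat with hj
    have hji : (j : ℤ) = i % n := Int.toNat_of_nonneg h1
    have hjn : j < n := by omega
    have hij : (i : ℤ) % n = (j : ℤ) % n := by
      rw [hji, Int.emod_emod_of_dvd _ dvd_rfl]
    have e1 : v i = v j := hcong i j hij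
    have e2 : v ((c : ℤ) - i) = v ((c : ℤ) - j) :=
      hcong _ _ (Int.ModEq.sub (Int.ModEq.refl (c : ℤ)) hij)
    rw [e1, e2, hval j hjn]
    exact hc j hjn
  have hA' := hsym a hA
  have hB' := hsym b hB
  have hd : ∀ i : ℤ, v (i + ((b : ℤ) - a)) = v i := by
    intro i
    have h := hB' ((a : ℤ) - i)
    rw [hA' i] at h
    rw [← h]; ring_nf
  -- shifts by multiples
  have hmul : ∀ (c : ℤ), (∀ i : ℤ, v (i + c) = v i) → ∀ (k : ℤ) (i : ℤ), v (i + c * k) = v i := by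
    intro c hc k
    have hc' : ∀ i : ℤ, v (i - c) = v i := by
      intro i
      have := (hc (i - c)).symm
      rwa [sub_add_cancel] at this
    induction k using Int.induction_on with
    | zero => simp
    | succ k ih =>
      intro i
      have e : i + c * ((k : ℤ) + 1) = (i + c * k) + c := by ring
      rw [e, hc, ih]
    | pred k ih =>
      intro i
      have e : i + c * (-(k : ℤ) - 1) = (i + c * (-(k : ℤ))) - c := by ring
      rw [e, hc', ih]
  have hnshift : ∀ i : ℤ, v (i + n) = v i := by
    intro i
    apply hcong
    simp [Int.add_mul_emod_self_left]
  set g : ℕ := Nat.gcd (b - a) n with hg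
  have hg0 : 0 < g := Nat.gcd_pos_of_pos_left _ (by omega)
  have hgd : g ≤ b - a := Nat.le_of_dvd (by omega) (Nat.gcd_dvd_left _ _)
  have hgn : g < n := by omega
  have hcast : ((b - a : ℕ) : ℤ) = (b : ℤ) - a := by omega
  -- g-shift invariance via Bezout
  have hbez : ∃ x y : ℤ, (g : ℤ) = ((b : ℤ) - a) * x + (n : ℤ) * y := by
    refine ⟨Int.gcdA (b - a : ℕ) n, Int.gcdB (b - a : ℕ) n, ?_⟩
    have h := Int.gcd_eq_gcd_ab ((b - a : ℕ) : ℤ) ((n : ℕ) : ℤ)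
    rw [Int.gcd_natCast_natCast] at h
    rw [h, hcast]
  obtain ⟨x, y, hxy⟩ := hbez
  have hgshift : ∀ i : ℤ, v (i + g) = v i := by
    intro i
    rw [hxy]
    have e : i + (((b : ℤ) - a) * x + (n : ℤ) * y) = (i + ((b : ℤ) - a) * x) + (n : ℤ) * y := by
      ring
    rw [e, hmul _ hnshift y, hmul _ hd x]
  have hperiod : ∀ i, i + g < n → w.getD i default = w.getD (i + g) default := by
    intro i hig
    rw [← hval i (by omega), ← hval (i + g) (by omega)]
    push_cast
    exact (hgshift i).symm
  refine ⟨⟨hgn, hperiod⟩, ?_⟩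
  -- not primitive
  have hdvd : g ∣ n := Nat.gcd_dvd_right _ _
  set p := n / g with hp
  have hpg : n = p * g := (Nat.div_mul_cancel hdvd).symm
  have hp2 : 2 ≤ p := by
    rcases Nat.lt_or_ge p 2 with h | h
    · interval_cases p <;> omega
    · exact h
  have hmodg : ∀ i, i < n → w.getD i default = w.getD (i % g) default := by
    intro i hi
    rw [← hval i hi, ← hval (i % g) (lt_of_lt_of_le (Nat.mod_lt i hg0) hgn.le)]
    have e : (i : ℤ) = ((i % g : ℕ) : ℤ) + (g : ℤ) * ((i / g : ℕ) : ℤ) := by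
      exact_mod_cast (Nat.mod_add_div i g).symm
    rw [e, hmul (g : ℤ) hgshift]
  intro hprim
  refine hprim ⟨w.take g, p, hp2, ?_⟩
  have hlen : (w.take g).length = g := by rw [List.length_take]; omega
  apply List.ext_getElem
  · rw [flatten_replicate_len, hlen, ← hn, ← hpg]
  · intro i h1 h2
    have h2' : i < p * (w.take g).length := by rwa [flatten_replicate_len] at h2
    have h1' : i < n := by rw [hn]; exact h1
    have him : i % g < g := Nat.mod_lt i hg0
    rw [← List.getD_eq_getElem _ default h1, ← List.getD_eq_getElem _ default h2,
      flatten_replicate_getD _ p i h2', hlen, hmodg i h1']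
    rw [List.getD_eq_getElem (w.take g) default (by rw [hlen]; exact him)]
    rw [List.getElem_take]
    exact List.getD_eq_getElem w default (by omega)
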